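/- arXiv:1001.3087 — 3 statements merged into one kernel-verified Lean document; each statement's English description precedes it below -/
import Mathlib

section
/- Let (X,Y) be a pair of random variables with X binary and Y taking values in a countable set. Then Z(X|Y)² ≤ H(X|Y), where Z(X|Y) = 2·Σ_y P_Y(y)·√(P_{X|Y}(0|y)·P_{X|Y}(1|y)) and H(X|Y) is the conditional entropy in bits. -/
/-- Conditional Shannon entropy (base 2) of a joint pmf `q x y`. -/
noncomputable def condEnt {α β : Type*} [Fintype α] (q : α → β → ℝ) : ℝ :=
  ∑' y : β, ∑ x : α, -(q x y * Real.logb 2 (q x y / ∑ x' : α, q x' y))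

/-- Conditional source Bhattacharyya parameter `Z(X|Y) = 2 Σ_y √(q(0,y) q(1,y))`. -/
noncomputable def bhat {β : Type*} (q : Bool → β → ℝ) : ℝ :=
  2 * ∑' y : β, Real.sqrt (q false y * q true y)

open Real Filter

/-! ### Auxiliary lemmas -/

private lemma aux_hasSum_f {s : ℝ} (hs : |s| < 1) :
    HasSum (fun m : ℕ => s ^ (2*m+2) * (1 / ((2*m+1) * (m+1) : ℝ)))
      ((1+s) * Real.log (1+s) + (1-s) * Real.log (1-s)) := by
  have hs' : |(-s)| < 1 := by rwa [abs_neg]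
  have h1 := (Real.hasSum_pow_div_log_of_abs_lt_one hs').mul_left (-(1+s))
  have h2 := (Real.hasSum_pow_div_log_of_abs_lt_one hs).mul_left (-(1-s))
  set term : ℕ → ℝ := fun n => -(1+s) * ((-s) ^ (n+1) / (n+1)) + -(1-s) * (s ^ (n+1) / (n+1)) with hterm
  have hT : HasSum term ((1+s) * Real.log (1+s) + (1-s) * Real.log (1-s)) := by
    have := h1.add h2
    convert this using 1
    · rfl
    rw [sub_neg_eq_add]
    ring
  have hu : Summable (fun m : ℕ => term (2*m)) :=
    hT.summable.comp_injective (fun a b h => by omega)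
  have hv : Summable (fun m : ℕ => term (2*m+1)) :=
    hT.summable.comp_injective (fun a b h => by omega)
  have heo := HasSum.even_add_odd hu.hasSum hv.hasSum
  have hval : (∑' m, term (2*m)) + (∑' m, term (2*m+1))
      = (1+s) * Real.log (1+s) + (1-s) * Real.log (1-s) := heo.unique hT
  have := hu.hasSum.add hv.hasSum
  rw [hval] at this
  convert this using 2 with m
  have e1 : (-s) ^ (2*m+1) = -(s ^ (2*m+1)) := Odd.neg_pow ⟨m, by ring⟩ s
  have e2 : (-s) ^ (2*m+2) = s ^ (2*m+2) := Even.neg_pow ⟨m+1, by ring⟩ s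
  simp only [term]
  rw [show 2*m+1+1 = 2*m+2 by ring] at *
  rw [e1]
  rw [show (2*m+1 : ℕ) + 1 = 2*m+2 by omega, e2]
  have d1 : ((2*m+1 : ℕ) : ℝ) + 1 = 2*(m:ℝ)+2 := by push_cast; ring
  have d2 : ((2*m : ℕ) : ℝ) + 1 = 2*(m:ℝ)+1 := by push_cast; ring
  rw [d1, d2]
  have p1 : (2*(m:ℝ)+1) ≠ 0 := by positivity
  have p2 : (2*(m:ℝ)+2) ≠ 0 := by positivity
  have p3 : ((m:ℝ)+1) ≠ 0 := by positivity
  field_simp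
  ring

private lemma aux_sum_c_le (M : ℕ) :
    ∑ m ∈ Finset.range M, (1 / ((2*m+1) * (m+1) : ℝ)) ≤ 2 * Real.log 2 := by
  set l : Filter ℝ := nhdsWithin 1 (Set.Ioo 0 1) with hl
  have hne : l.NeBot := right_nhdsWithin_Ioo_neBot (by norm_num)
  have hA : Tendsto (fun s : ℝ => ∑ m ∈ Finset.range M, s ^ (2*m+2) * (1 / ((2*m+1) * (m+1) : ℝ))) l
      (nhds (∑ m ∈ Finset.range M, (1 / ((2*m+1) * (m+1) : ℝ)))) := by
    have hc : Continuous (fun s : ℝ =>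
        ∑ m ∈ Finset.range M, s ^ (2*m+2) * (1 / ((2*m+1) * (m+1) : ℝ))) := by
      continuity
    have := hc.tendsto 1
    simp only [one_pow, one_mul] at this
    exact this.mono_left nhdsWithin_le_nhds
  have hB : Tendsto (fun s : ℝ => (1+s) * Real.log (1+s) + (1-s) * Real.log (1-s)) l
      (nhds (2 * Real.log 2)) := by
    have hc : Continuous (fun s : ℝ => (1+s) * Real.log (1+s) + (1-s) * Real.log (1-s)) := by
      have h1 : Continuous (fun s : ℝ => (1+s) * Real.log (1+s)) :=
        (Real.continuous_mul_log).comp (by continuity)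
      have h2 : Continuous (fun s : ℝ => (1-s) * Real.log (1-s)) :=
        (Real.continuous_mul_log).comp (by continuity)
      exact h1.add h2
    have := hc.tendsto 1
    norm_num at this
    exact this.mono_left nhdsWithin_le_nhds
  refine le_of_tendsto_of_tendsto hA hB ?_
  have hev : ∀ᶠ s in l, s ∈ Set.Ioo (0:ℝ) 1 := eventually_mem_nhdsWithin
  filter_upwards [hev] with s hs
  have habs : |s| < 1 := by rw [abs_lt]; constructor <;> [linarith [hs.1]; exact hs.2]
  have hS := aux_hasSum_f habs
  rw [← hS.tsum_eq]
  apply Summable.sum_le_tsum _ _ hS.summable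
  intro m _
  have hs0 : (0:ℝ) ≤ s := hs.1.le
  exact mul_nonneg (pow_nonneg hs0 _) (by positivity)

private lemma aux_summable_c : Summable (fun m : ℕ => (1 / ((2*m+1) * (m+1) : ℝ))) :=
  summable_of_sum_range_le (c := 2 * Real.log 2) (fun m => by positivity) aux_sum_c_le

private lemma aux_tsum_c_le : ∑' m : ℕ, (1 / ((2*m+1) * (m+1) : ℝ)) ≤ 2 * Real.log 2 :=
  Summable.tsum_le_of_sum_range_le aux_summable_c aux_sum_c_le

private lemma aux_lemF {s : ℝ} (hs : |s| < 1) :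
    (1+s) * Real.log (1+s) + (1-s) * Real.log (1-s) ≤ 2 * Real.log 2 * s^2 := by
  have hS := aux_hasSum_f hs
  rw [← hS.tsum_eq]
  have hs2 : s^2 ≤ 1 := by nlinarith [abs_lt.1 hs]
  calc ∑' m : ℕ, s ^ (2*m+2) * (1 / ((2*m+1) * (m+1) : ℝ))
      ≤ ∑' m : ℕ, s^2 * (1 / ((2*m+1) * (m+1) : ℝ)) := by
        apply Summable.tsum_le_tsum _ hS.summable (aux_summable_c.mul_left _)
        intro m
        have : s ^ (2*m+2) = (s^2)^(m+1) := by rw [← pow_mul]; ring_nf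
        rw [this]
        have h1 : (s^2)^(m+1) ≤ (s^2)^1 := pow_le_pow_of_le_one (sq_nonneg s) hs2 (by omega)
        rw [pow_one] at h1
        exact mul_le_mul_of_nonneg_right h1 (by positivity)
    _ = s^2 * ∑' m : ℕ, (1 / ((2*m+1) * (m+1) : ℝ)) := tsum_mul_left
    _ ≤ s^2 * (2 * Real.log 2) := mul_le_mul_of_nonneg_left aux_tsum_c_le (sq_nonneg s)
    _ = 2 * Real.log 2 * s^2 := by ring

private lemma aux_lemCL {t : ℝ} (h0 : 0 < t) (h1 : t < 1) :
    4 * Real.log 2 * (t * (1-t)) ≤ -(t * Real.log t) - (1-t) * Real.log (1-t) := by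
  have hs : |2*t - 1| < 1 := by rw [abs_lt]; constructor <;> linarith
  have hF := aux_lemF hs
  have e1 : (1 + (2*t-1)) = 2*t := by ring
  have e2 : (1 - (2*t-1)) = 2*(1-t) := by ring
  rw [e1, e2] at hF
  rw [Real.log_mul two_ne_zero h0.ne', Real.log_mul two_ne_zero (by linarith)] at hF
  nlinarith [hF]

/-- The per-symbol conditional entropy contribution. -/
private noncomputable def Hent (a b : ℝ) : ℝ :=
  -(b * Real.logb 2 (b/(b+a))) + -(a * Real.logb 2 (a/(b+a)))

private lemma Hent_nonneg {a b : ℝ} (ha : 0 ≤ a) (hb : 0 ≤ b) : 0 ≤ Hent a b := by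
  unfold Hent
  have hS : 0 ≤ b + a := by linarith
  have h1 : Real.logb 2 (b/(b+a)) ≤ 0 := by
    apply Real.logb_nonpos one_lt_two (by positivity)
    rcases eq_or_lt_of_le hS with h | h
    · simp [← h]
    · rw [div_le_one h]; linarith
  have h2 : Real.logb 2 (a/(b+a)) ≤ 0 := by
    apply Real.logb_nonpos one_lt_two (by positivity)
    rcases eq_or_lt_of_le hS with h | h
    · simp [← h]
    · rw [div_le_one h]; linarith
  nlinarith

private lemma Hent_zero_left {b : ℝ} : Hent 0 b = 0 := by
  unfold Hent
  rcases eq_or_ne b 0 with rfl | hb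
  · simp
  · rw [add_zero, div_self hb]
    simp

private lemma Hent_zero_right {a : ℝ} : Hent a 0 = 0 := by
  unfold Hent
  rcases eq_or_ne a 0 with rfl | ha
  · simp
  · rw [zero_add, div_self ha]
    simp

private lemma Hent_le {a b : ℝ} (ha : 0 ≤ a) (hb : 0 ≤ b) : Hent a b ≤ b + a := by
  rcases eq_or_lt_of_le ha with rfl | ha'
  · rw [Hent_zero_left]; linarith
  rcases eq_or_lt_of_le hb with rfl | hb'
  · rw [Hent_zero_right]; linarith
  set S := b + a with hSdef
  have hS : 0 < S := by positivity
  have hL : 0 < Real.log 2 := Real.log_pos one_lt_two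
  have hBE : Real.binEntropy (a/S) ≤ Real.log 2 := Real.binEntropy_le_log_two
  have hone : 1 - a/S = b/S := by field_simp; rw [hSdef]; ring
  rw [Real.binEntropy_eq_negMulLog_add_negMulLog_one_sub, hone,
    Real.negMulLog, Real.negMulLog] at hBE
  set u := Real.log (a/S)
  set v := Real.log (b/S)
  have key : -(a*u) - b*v ≤ S * Real.log 2 := by
    have h := mul_le_mul_of_nonneg_left hBE hS.le
    have e : S * (-(a/S)*u + -(b/S)*v) = -(a*u) - b*v := by field_simp; ring
    rw [e] at h
    linarith
  unfold Hent
  rw [Real.logb, Real.logb, ← hSdef]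
  have e2 : -(b * (v / Real.log 2)) + -(a * (u / Real.log 2))
      = (-(a*u) - b*v)/Real.log 2 := by
    field_simp
    ring
  rw [e2, div_le_iff₀ hL]
  linarith

private lemma Hent_key {a b : ℝ} (ha : 0 ≤ a) (hb : 0 ≤ b) :
    4*(a*b) ≤ (b+a) * Hent a b := by
  rcases eq_or_lt_of_le ha with rfl | ha'
  · rw [Hent_zero_left]; simp
  rcases eq_or_lt_of_le hb with rfl | hb'
  · rw [Hent_zero_right]; simp
  set S := b + a with hSdef
  have hS : 0 < S := by positivity
  have hL : 0 < Real.log 2 := Real.log_pos one_lt_two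
  have ht0 : 0 < a/S := by positivity
  have ht1 : a/S < 1 := by rw [div_lt_one hS]; linarith
  have key := aux_lemCL ht0 ht1
  have hone : 1 - a/S = b/S := by field_simp; rw [hSdef]; ring
  rw [hone] at key
  set u := Real.log (a/S)
  set v := Real.log (b/S)
  have key' : 4 * Real.log 2 * (a*b) ≤ S * (-(a*u) - b*v) := by
    have h := mul_le_mul_of_nonneg_left key (by positivity : (0:ℝ) ≤ S*S)
    have e1 : S*S*(4 * Real.log 2 * (a/S*(b/S))) = 4 * Real.log 2 * (a*b) := by
      field_simp
    have e2 : S*S*(-(a/S*u) - b/S*v) = S*(-(a*u) - b*v) := by field_simp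
    rw [e1, e2] at h
    exact h
  unfold Hent
  rw [Real.logb, Real.logb, ← hSdef]
  have e3 : S * (-(b * (v / Real.log 2)) + -(a * (u / Real.log 2)))
      = S*(-(a*u) - b*v)/Real.log 2 := by
    field_simp
    ring
  rw [e3, le_div_iff₀ hL]
  nlinarith [key']

private lemma tsum_CS (f g : ℕ → ℝ) (hf : ∀ y, 0 ≤ f y) (hg : ∀ y, 0 ≤ g y)
    (hf2 : Summable (fun y => f y ^ 2)) (hg2 : Summable (fun y => g y ^ 2)) :
    (∑' y, f y * g y) ^ 2 ≤ (∑' y, f y ^ 2) * (∑' y, g y ^ 2) := by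
  set C := (∑' y, f y ^ 2) * (∑' y, g y ^ 2) with hC
  have hCnn : 0 ≤ C :=
    mul_nonneg (tsum_nonneg fun y => sq_nonneg _) (tsum_nonneg fun y => sq_nonneg _)
  have hfg : Summable (fun y => f y * g y) := by
    apply Summable.of_nonneg_of_le (fun y => mul_nonneg (hf y) (hg y))
      (fun y => ?_) ((hf2.add hg2).div_const 2)
    have h := sq_nonneg (f y - g y)
    nlinarith
  have hbound : ∀ s : Finset ℕ, ∑ y ∈ s, f y * g y ≤ Real.sqrt C := by
    intro s
    have h1 : (∑ y ∈ s, f y * g y)^2 ≤ (∑ y ∈ s, f y ^2) * (∑ y ∈ s, g y^2) :=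
      Finset.sum_mul_sq_le_sq_mul_sq s f g
    have h2 : (∑ y ∈ s, f y ^2) * (∑ y ∈ s, g y^2) ≤ C := by
      apply mul_le_mul (Summable.sum_le_tsum s (fun y _ => sq_nonneg _) hf2)
        (Summable.sum_le_tsum s (fun y _ => sq_nonneg _) hg2)
        (Finset.sum_nonneg fun y _ => sq_nonneg _)
        (tsum_nonneg fun y => sq_nonneg _)
    have h3 : (∑ y ∈ s, f y * g y) ≤ Real.sqrt ((∑ y ∈ s, f y * g y)^2) := by
      rw [Real.sqrt_sq (Finset.sum_nonneg fun y _ => mul_nonneg (hf y) (hg y))]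
    exact h3.trans (Real.sqrt_le_sqrt (h1.trans h2))
  have h4 : (∑' y, f y * g y) ≤ Real.sqrt C := Summable.tsum_le_of_sum_le hfg hbound
  have h5 : 0 ≤ (∑' y, f y * g y) := tsum_nonneg fun y => mul_nonneg (hf y) (hg y)
  calc (∑' y, f y * g y)^2 ≤ (Real.sqrt C)^2 := by gcongr
    _ = C := Real.sq_sqrt hCnn

/-- `Z(X|Y)² ≤ H(X|Y)`. -/
theorem stmt8 (p : Bool → ℕ → ℝ) (hp : ∀ x y, 0 ≤ p x y)
    (hsum : HasSum (fun z : Bool × ℕ => p z.1 z.2) 1) :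
    (bhat p) ^ 2 ≤ condEnt p := by
  have hsmm := hsum.summable
  have hsx : ∀ x : Bool, Summable (fun y => p x y) := by
    intro x
    have : Summable ((fun z : Bool × ℕ => p z.1 z.2) ∘ (fun y : ℕ => (x, y))) :=
      hsmm.comp_injective (fun u v h => by simpa using h)
    exact this
  set a : ℕ → ℝ := fun y => p false y with hadef
  set b : ℕ → ℝ := fun y => p true y with hbdef
  set P : ℕ → ℝ := fun y => b y + a y with hPdef
  have ha0 : ∀ y, 0 ≤ a y := fun y => hp false y
  have hb0 : ∀ y, 0 ≤ b y := fun y => hp true y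
  have hP0 : ∀ y, 0 ≤ P y := fun y => add_nonneg (hb0 y) (ha0 y)
  have hsP : Summable P := (hsx true).add (hsx false)
  have hPsum : ∑' y, P y = 1 := by
    have hprod : HasSum (fun x : Bool => ∑' y, p x y) 1 :=
      hsum.prod_fiberwise (fun x => (hsx x).hasSum)
    have h1 : ∑' y, p true y + ∑' y, p false y = 1 := by
      have := hprod.tsum_eq
      rwa [tsum_fintype, Fintype.sum_bool] at this
    rw [hPdef]
    rw [Summable.tsum_add (hsx true) (hsx false)]
    exact h1
  set H : ℕ → ℝ := fun y => Hent (a y) (b y) with hHdef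
  have hHnn : ∀ y, 0 ≤ H y := fun y => Hent_nonneg (ha0 y) (hb0 y)
  have hHle : ∀ y, H y ≤ P y := fun y => Hent_le (ha0 y) (hb0 y)
  have hsH : Summable H := Summable.of_nonneg_of_le hHnn hHle hsP
  have hCE : condEnt p = ∑' y, H y := by
    unfold condEnt
    congr 1
    funext y
    rw [Fintype.sum_bool, Fintype.sum_bool]
    rfl
  set F : ℕ → ℝ := fun y => Real.sqrt (P y) with hFdef
  set G : ℕ → ℝ := fun y => 2 * Real.sqrt (a y * b y) / Real.sqrt (P y) with hGdef
  have hF0 : ∀ y, 0 ≤ F y := fun y => Real.sqrt_nonneg _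
  have hG0 : ∀ y, 0 ≤ G y := fun y => by
    apply div_nonneg _ (Real.sqrt_nonneg _)
    positivity
  have hFG : ∀ y, F y * G y = 2 * Real.sqrt (a y * b y) := by
    intro y
    rcases eq_or_lt_of_le (hP0 y) with h | h
    · have hay : a y = 0 := by
        have := hb0 y; have := ha0 y
        simp only [hPdef] at h
        linarith
      simp [hFdef, hGdef, hay]
    · have hFy : F y ≠ 0 := by
        simp only [hFdef]
        positivity
      rw [hGdef]
      field_simp
      simp only [hFdef]
      ring
  have hF2 : ∀ y, F y ^ 2 = P y := fun y => Real.sq_sqrt (hP0 y)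
  have hG2 : ∀ y, G y ^ 2 ≤ H y := by
    intro y
    rcases eq_or_lt_of_le (hP0 y) with h | h
    · have hay : a y = 0 := by
        have := hb0 y; have := ha0 y
        simp only [hPdef] at h
        linarith
      simp only [hGdef, hay]
      simpa using hHnn y
    · have key := Hent_key (ha0 y) (hb0 y)
      have hGsq : G y ^ 2 = 4 * (a y * b y) / P y := by
        rw [hGdef]
        rw [div_pow, mul_pow, Real.sq_sqrt (mul_nonneg (ha0 y) (hb0 y)),
          Real.sq_sqrt (hP0 y)]
        norm_num
      rw [hGsq, div_le_iff₀ h]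
      calc 4 * (a y * b y) ≤ (b y + a y) * Hent (a y) (b y) := key
        _ = H y * P y := by rw [hHdef, hPdef]; ring
  have hsG2 : Summable (fun y => G y ^ 2) :=
    Summable.of_nonneg_of_le (fun y => sq_nonneg _) hG2 hsH
  have hsF2 : Summable (fun y => F y ^ 2) := by
    apply Summable.congr hsP
    intro y
    exact (hF2 y).symm
  have hbhat : bhat p = ∑' y, F y * G y := by
    unfold bhat
    rw [← tsum_mul_left]
    congr 1
    funext y
    rw [hFG y]
  rw [hbhat, hCE]
  calc (∑' y, F y * G y) ^ 2 ≤ (∑' y, F y ^ 2) * (∑' y, G y ^ 2) :=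
        tsum_CS F G hF0 hG0 hsF2 hsG2
    _ = (∑' y, P y) * (∑' y, G y ^ 2) := by
        congr 1
        exact tsum_congr hF2
    _ = ∑' y, G y ^ 2 := by rw [hPsum, one_mul]
    _ ≤ ∑' y, H y := Summable.tsum_le_tsum hG2 hsG2 hsH
end

section
/- Let (X,Y) be a pair of random variables with X binary and Y countable-valued. Then H(X|Y) ≤ log₂(1 + Z(X|Y)), where Z(X|Y) = 2·Σ_y P_Y(y)·√(P_{X|Y}(0|y)·P_{X|Y}(1|y)). -/
lemma lnkey (a b T : ℝ) (ha : 0 ≤ a) (hb : 0 ≤ b) (hT : 1 ≤ T) :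
    -(a * Real.log (a / (a + b))) + -(b * Real.log (b / (a + b))) ≤
      (a + b) * Real.log T + (Real.sqrt a + Real.sqrt b) ^ 2 / T - (a + b) := by
  have hT0 : (0:ℝ) < T := lt_of_lt_of_le one_pos hT
  have hlogT : 1 - 1/T ≤ Real.log T := by
    have h := Real.log_le_sub_one_of_pos (x := 1/T) (by positivity)
    rw [Real.log_div one_ne_zero hT0.ne', Real.log_one] at h
    linarith
  rcases ha.eq_or_lt with rfl | ha0
  · rcases hb.eq_or_lt with rfl | hb0
    · simp
    · rw [zero_add, div_self hb0.ne', Real.log_one]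
      simp only [Real.sqrt_zero, zero_add, zero_mul, neg_zero, mul_one, add_zero]
      rw [Real.sq_sqrt hb]
      have h : b * (1 - 1/T) ≤ b * Real.log T := mul_le_mul_of_nonneg_left hlogT hb0.le
      have h2 : b * (1 - 1/T) = b - b / T := by ring
      linarith [h2.symm.trans_le h]
  rcases hb.eq_or_lt with rfl | hb0
  · rw [add_zero, div_self ha0.ne', Real.log_one]
    simp only [Real.sqrt_zero, add_zero, zero_mul, neg_zero, mul_one, zero_add]
    rw [Real.sq_sqrt ha]
    have h : a * (1 - 1/T) ≤ a * Real.log T := mul_le_mul_of_nonneg_left hlogT ha0.le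
    have h2 : a * (1 - 1/T) = a - a / T := by ring
    linarith [h2.symm.trans_le h]
  -- main case
  have hs0 : (0:ℝ) < a + b := by linarith
  set sa := Real.sqrt a with hsadef
  set sb := Real.sqrt b with hsbdef
  have hsa0 : 0 < sa := Real.sqrt_pos.mpr ha0
  have hsb0 : 0 < sb := Real.sqrt_pos.mpr hb0
  have hsa2 : sa * sa = a := Real.mul_self_sqrt ha
  have hsb2 : sb * sb = b := Real.mul_self_sqrt hb
  set r := sa * sb with hrdef
  have hr0 : 0 < r := mul_pos hsa0 hsb0
  have hu0 : 0 < a + r := by linarith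
  have hv0 : 0 < b + r := by linarith
  -- step B for a
  have h3a : a * Real.log (a + r) - a * Real.log a ≤
      a * Real.log T + (a + r)/T - a := by
    have hlog := Real.log_le_sub_one_of_pos (x := (a + r)/(a*T)) (by positivity)
    rw [Real.log_div hu0.ne' (by positivity), Real.log_mul ha0.ne' hT0.ne'] at hlog
    have h := mul_le_mul_of_nonneg_left hlog ha0.le
    have e1 : a * ((a + r)/(a*T)) = (a + r)/T := by field_simp
    nlinarith [h, e1]
  have h3b : b * Real.log (b + r) - b * Real.log b ≤
      b * Real.log T + (b + r)/T - b := by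
    have hlog := Real.log_le_sub_one_of_pos (x := (b + r)/(b*T)) (by positivity)
    rw [Real.log_div hv0.ne' (by positivity), Real.log_mul hb0.ne' hT0.ne'] at hlog
    have h := mul_le_mul_of_nonneg_left hlog hb0.le
    have e1 : b * ((b + r)/(b*T)) = (b + r)/T := by field_simp
    nlinarith [h, e1]
  -- step A
  have hea : a * ((a+b)/(a+r)) = (a+b) * sa / (sa + sb) := by
    rw [← mul_div_assoc, div_eq_div_iff hu0.ne' (by positivity)]
    linear_combination (-(a + b) * sb) * hsa2
  have heb : b * ((a+b)/(b+r)) = (a+b) * sb / (sa + sb) := by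
    rw [← mul_div_assoc, div_eq_div_iff hv0.ne' (by positivity)]
    linear_combination (-(a + b) * sa) * hsb2
  have hP : (a+b) * sa / (sa + sb) + (a+b) * sb / (sa + sb) = a + b := by
    field_simp
  have h2a : a * Real.log (a+b) - a * Real.log (a + r) ≤ a * ((a+b)/(a+r)) - a := by
    have hlog := Real.log_le_sub_one_of_pos (x := (a+b)/(a+r)) (by positivity)
    rw [Real.log_div hs0.ne' hu0.ne'] at hlog
    have h := mul_le_mul_of_nonneg_left hlog ha0.le
    nlinarith [h]
  have h2b : b * Real.log (a+b) - b * Real.log (b + r) ≤ b * ((a+b)/(b+r)) - b := by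
    have hlog := Real.log_le_sub_one_of_pos (x := (a+b)/(b+r)) (by positivity)
    rw [Real.log_div hs0.ne' hv0.ne'] at hlog
    have h := mul_le_mul_of_nonneg_left hlog hb0.le
    nlinarith [h]
  -- assemble
  have hsq : (sa + sb)^2 = a + b + 2*r := by
    linear_combination hsa2 + hsb2
  have hdiv : (a + b + 2*r)/T = (a + r)/T + (b + r)/T := by ring
  rw [Real.log_div ha0.ne' hs0.ne', Real.log_div hb0.ne' hs0.ne', hsq, hdiv]
  linarith [h3a, h3b, h2a, h2b, hea, heb, hP]

/-- `H(X|Y) ≤ log₂(1 + Z(X|Y))`. -/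
theorem stmt10 (p : Bool → ℕ → ℝ) (hp : ∀ x y, 0 ≤ p x y)
    (hsum : HasSum (fun z : Bool × ℕ => p z.1 z.2) 1) :
    condEnt p ≤ Real.logb 2 (1 + bhat p) := by
  set T := 1 + bhat p with hTdef
  have hlog2 : (0:ℝ) < Real.log 2 := Real.log_pos one_lt_two
  -- marginal has sum 1
  have hswap : HasSum (fun z : ℕ × Bool => p z.2 z.1) 1 :=
    ((Equiv.prodComm ℕ Bool).hasSum_iff).mpr hsum
  have hS' : HasSum (fun y => ∑ x : Bool, p x y) 1 :=
    hswap.prod_fiberwise (fun y => hasSum_fintype (fun x => p x y))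
  have hS : HasSum (fun y => p true y + p false y) 1 := by
    simpa [Fintype.sum_bool] using hS'
  -- summability of the Bhattacharyya terms
  have hRle : ∀ y, Real.sqrt (p false y * p true y) ≤ (p true y + p false y) / 2 := by
    intro y
    rw [show (p true y + p false y) / 2 = Real.sqrt (((p true y + p false y) / 2)^2) from
      (Real.sqrt_sq (by have := hp true y; have := hp false y; linarith)).symm]
    apply Real.sqrt_le_sqrt
    nlinarith [sq_nonneg (p true y - p false y), hp false y, hp true y]
  have hR : Summable (fun y => Real.sqrt (p false y * p true y)) :=
    Summable.of_nonneg_of_le (fun y => Real.sqrt_nonneg _) hRle (hS.summable.div_const 2)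
  have hbhat : bhat p = 2 * ∑' y, Real.sqrt (p false y * p true y) := rfl
  have hT1 : 1 ≤ T := by
    rw [hTdef, hbhat]
    have : 0 ≤ ∑' y, Real.sqrt (p false y * p true y) :=
      tsum_nonneg (fun y => Real.sqrt_nonneg _)
    linarith
  have hT0 : (0:ℝ) < T := lt_of_lt_of_le one_pos hT1
  -- the squared sums
  have expand : ∀ y, (Real.sqrt (p true y) + Real.sqrt (p false y))^2 =
      (p true y + p false y) + 2 * Real.sqrt (p false y * p true y) := by
    intro y
    rw [add_sq, Real.sq_sqrt (hp true y), Real.sq_sqrt (hp false y),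
      Real.sqrt_mul (hp false y)]
    ring
  have ht : HasSum (fun y => (Real.sqrt (p true y) + Real.sqrt (p false y))^2) T := by
    have h := hS.add (hR.hasSum.mul_left 2)
    rw [hTdef, hbhat]
    simpa [expand] using h
  -- the majorant
  set M : ℕ → ℝ := fun y =>
    ((p true y + p false y) * Real.log T
        + (Real.sqrt (p true y) + Real.sqrt (p false y))^2 / T
      - (p true y + p false y)) / Real.log 2 with hMdef
  have hM : HasSum M (Real.logb 2 T) := by
    have h := (((hS.mul_right (Real.log T)).add (ht.div_const T)).sub hS).div_const
      (Real.log 2)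
    rw [div_self hT0.ne', one_mul] at h
    simpa [← Real.log_div_log] using h
  -- the entropy terms
  set L : ℕ → ℝ := fun y =>
    ∑ x : Bool, -(p x y * Real.logb 2 (p x y / ∑ x' : Bool, p x' y)) with hLdef
  have hLM : ∀ y, L y ≤ M y := by
    intro y
    have key := lnkey (p true y) (p false y) T (hp true y) (hp false y) hT1
    rw [hLdef]
    simp only [Fintype.sum_bool, Real.logb, hMdef]
    rw [show -(p true y * (Real.log (p true y / (p true y + p false y)) / Real.log 2))
          + -(p false y * (Real.log (p false y / (p true y + p false y)) / Real.log 2))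
        = (-(p true y * Real.log (p true y / (p true y + p false y)))
          + -(p false y * Real.log (p false y / (p true y + p false y)))) / Real.log 2
      from by ring]
    exact (div_le_div_iff_of_pos_right hlog2).mpr key
  have hL0 : ∀ y, 0 ≤ L y := by
    intro y
    rw [hLdef]
    apply Finset.sum_nonneg
    intro x _
    have hsnn : (0:ℝ) ≤ ∑ x' : Bool, p x' y :=
      Finset.sum_nonneg (fun i _ => hp i y)
    have hs : p x y ≤ ∑ x' : Bool, p x' y :=
      Finset.single_le_sum (f := fun x' => p x' y) (fun i _ => hp i y) (Finset.mem_univ x)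
    have hlb : Real.logb 2 (p x y / ∑ x' : Bool, p x' y) ≤ 0 :=
      Real.logb_nonpos one_lt_two (div_nonneg (hp x y) hsnn) (div_le_one_of_le₀ hs hsnn)
    nlinarith [mul_nonneg (hp x y) (neg_nonneg.mpr hlb)]
  have hLsum : Summable L := Summable.of_nonneg_of_le hL0 hLM hM.summable
  calc condEnt p = ∑' y, L y := rfl
    _ ≤ ∑' y, M y := Summable.tsum_le_tsum hLM hLsum hM.summable
    _ = Real.logb 2 T := hM.tsum_eq
end

section
/- Let (X,Y) be a binary source pair with conditional Bhattacharyya parameter Z(X|Y) ∈ [0,1]. Then Z(X|Y) = 0 if and only if H(X|Y) = 0, and Z(X|Y) = 1 if and only if H(X|Y) = 1. -/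
/- ### Auxiliary pointwise lemmas -/

private lemma term_nonneg {a s : ℝ} (ha : 0 ≤ a) (hs : a ≤ s) :
    0 ≤ -(a * Real.logb 2 (a / s)) := by
  have hs0 : 0 ≤ s := ha.trans hs
  have h0 : 0 ≤ a / s := div_nonneg ha hs0
  have h1 : a / s ≤ 1 := div_le_one_of_le₀ hs hs0
  have := Real.logb_nonpos (by norm_num : (1:ℝ) < 2) h0 h1
  nlinarith

private lemma term_self_zero {b : ℝ} (hb : 0 ≤ b) :
    -(b * Real.logb 2 (b / b)) = 0 := by
  rcases hb.eq_or_lt with h | h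
  · simp [← h]
  · rw [div_self (ne_of_gt h), Real.logb_one]; ring

private lemma h2_nonneg {a b : ℝ} (ha : 0 ≤ a) (hb : 0 ≤ b) :
    0 ≤ -(a * Real.logb 2 (a / (a + b))) + -(b * Real.logb 2 (b / (a + b))) :=
  add_nonneg (term_nonneg ha (by linarith)) (term_nonneg hb (by linarith))

private lemma h2_eq_zero_iff {a b : ℝ} (ha : 0 ≤ a) (hb : 0 ≤ b) :
    -(a * Real.logb 2 (a / (a + b))) + -(b * Real.logb 2 (b / (a + b))) = 0 ↔ a * b = 0 := by
  constructor
  · intro h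
    by_contra hab
    obtain ⟨ha0, hb0⟩ := mul_ne_zero_iff.mp hab
    have ha' : 0 < a := ha.lt_of_ne (Ne.symm ha0)
    have hb' : 0 < b := hb.lt_of_ne (Ne.symm hb0)
    have hs : 0 < a + b := by linarith
    have h1 : a / (a + b) < 1 := (div_lt_one hs).mpr (by linarith)
    have h0 : 0 < a / (a + b) := div_pos ha' hs
    have hlog := Real.logb_neg (by norm_num : (1:ℝ) < 2) h0 h1
    have key1 : 0 < -(a * Real.logb 2 (a / (a + b))) := by nlinarith
    have key2 := term_nonneg hb (by linarith : b ≤ a + b)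
    linarith
  · intro h
    rcases mul_eq_zero.mp h with h | h
    · rw [h]; simpa using term_self_zero hb
    · rw [h]; simpa using term_self_zero ha

private lemma h2_eq_of_eq {a : ℝ} (ha : 0 ≤ a) :
    -(a * Real.logb 2 (a / (a + a))) + -(a * Real.logb 2 (a / (a + a))) = a + a := by
  rcases ha.eq_or_lt with h | h
  · simp [← h]
  · have e : a / (a + a) = (2:ℝ)⁻¹ := by
      rw [show a + a = 2 * a by ring]
      field_simp
    rw [e, Real.logb_inv, Real.logb_self_eq_one (by norm_num : (1:ℝ) < 2)]
    ring

private lemma h2_lt_of_ne {a b : ℝ} (ha : 0 ≤ a) (hb : 0 ≤ b) (hne : a ≠ b) :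
    -(a * Real.logb 2 (a / (a + b))) + -(b * Real.logb 2 (b / (a + b))) < a + b := by
  rcases ha.eq_or_lt with h | ha'
  · have hb' : 0 < b := hb.lt_of_ne (fun hh => hne (h.symm.trans hh))
    rw [← h]
    have : -(b * Real.logb 2 (b / (0 + b))) = 0 := by
      rw [zero_add]; exact term_self_zero hb
    rw [this]; simpa using hb'
  rcases hb.eq_or_lt with h | hb'
  · rw [← h]
    have : -(a * Real.logb 2 (a / (a + 0))) = 0 := by
      rw [add_zero]; exact term_self_zero ha
    rw [this]; simpa using ha'
  -- main case 0 < a, 0 < b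
  set s := a + b with hs
  have hs' : 0 < s := by positivity
  have L2 : (0:ℝ) < Real.log 2 := Real.log_pos (by norm_num)
  have la : Real.log (s / (2 * a)) < s / (2 * a) - 1 := by
    refine Real.log_lt_sub_one_of_pos (by positivity) ?_
    intro hcon
    rw [div_eq_one_iff_eq (by positivity)] at hcon
    exact hne (by linarith [hcon])
  have lb : Real.log (s / (2 * b)) < s / (2 * b) - 1 := by
    refine Real.log_lt_sub_one_of_pos (by positivity) ?_
    intro hcon
    rw [div_eq_one_iff_eq (by positivity)] at hcon
    exact hne (by linarith [hcon])
  have ea : Real.log (s / (2 * a)) = Real.log s - Real.log 2 - Real.log a := by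
    rw [Real.log_div (ne_of_gt hs') (by positivity), Real.log_mul (by norm_num) (ne_of_gt ha')]
    ring
  have eb : Real.log (s / (2 * b)) = Real.log s - Real.log 2 - Real.log b := by
    rw [Real.log_div (ne_of_gt hs') (by positivity), Real.log_mul (by norm_num) (ne_of_gt hb')]
    ring
  rw [ea] at la
  rw [eb] at lb
  have A1 : a * (Real.log s - Real.log 2 - Real.log a) < s / 2 - a := by
    have := mul_lt_mul_of_pos_left la ha'
    have e2 : a * (s / (2 * a) - 1) = s / 2 - a := by field_simp
    linarith [e2 ▸ this]
  have A2 : b * (Real.log s - Real.log 2 - Real.log b) < s / 2 - b := by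
    have := mul_lt_mul_of_pos_left lb hb'
    have e2 : b * (s / (2 * b) - 1) = s / 2 - b := by field_simp
    linarith [e2 ▸ this]
  have key : a * (Real.log s - Real.log a) + b * (Real.log s - Real.log b) < s * Real.log 2 := by
    nlinarith
  have ga : Real.logb 2 (a / s) = (Real.log a - Real.log s) / Real.log 2 := by
    rw [Real.logb, Real.log_div (ne_of_gt ha') (ne_of_gt hs')]
  have gb : Real.logb 2 (b / s) = (Real.log b - Real.log s) / Real.log 2 := by
    rw [Real.logb, Real.log_div (ne_of_gt hb') (ne_of_gt hs')]
  rw [ga, gb]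
  have erw : -(a * ((Real.log a - Real.log s) / Real.log 2)) +
      -(b * ((Real.log b - Real.log s) / Real.log 2)) =
      (a * (Real.log s - Real.log a) + b * (Real.log s - Real.log b)) / Real.log 2 := by
    field_simp; ring
  rw [erw, div_lt_iff₀ L2]
  linarith

private lemma h2_le {a b : ℝ} (ha : 0 ≤ a) (hb : 0 ≤ b) :
    -(a * Real.logb 2 (a / (a + b))) + -(b * Real.logb 2 (b / (a + b))) ≤ a + b := by
  rcases eq_or_ne a b with rfl | h
  · exact (h2_eq_of_eq ha).le
  · exact (h2_lt_of_ne ha hb h).le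

private lemma sqrt_eq_half {a : ℝ} (ha : 0 ≤ a) : Real.sqrt (a * a) = (a + a) / 2 := by
  rw [Real.sqrt_mul_self ha]; ring

private lemma sqrt_lt_half {a b : ℝ} (ha : 0 ≤ a) (hb : 0 ≤ b) (h : a ≠ b) :
    Real.sqrt (b * a) < (a + b) / 2 := by
  have hne' : a - b ≠ 0 := sub_ne_zero.mpr h
  have hsq : 0 < (a - b) ^ 2 := lt_of_le_of_ne (sq_nonneg _) (Ne.symm (pow_ne_zero 2 hne'))
  have hlt : b * a < ((a + b) / 2) ^ 2 := by nlinarith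
  calc Real.sqrt (b * a) < Real.sqrt (((a + b) / 2) ^ 2) :=
        Real.sqrt_lt_sqrt (by positivity) hlt
    _ = (a + b) / 2 := Real.sqrt_sq (by positivity)

private lemma sqrt_le_half {a b : ℝ} (ha : 0 ≤ a) (hb : 0 ≤ b) :
    Real.sqrt (b * a) ≤ (a + b) / 2 := by
  rcases eq_or_ne a b with rfl | h
  · exact (sqrt_eq_half ha).le
  · exact (sqrt_lt_half ha hb h).le

private lemma tsum_zero_iff_nonneg {f : ℕ → ℝ} (hf : Summable f) (h0 : ∀ i, 0 ≤ f i) :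
    ∑' i, f i = 0 ↔ ∀ i, f i = 0 := by
  constructor
  · intro h i
    have h1 := Summable.le_tsum hf i fun j _ => h0 j
    have h2 := h0 i
    linarith [h ▸ h1]
  · intro h
    have : ∑' i, f i = ∑' _ : ℕ, (0:ℝ) := tsum_congr (f := f) (g := fun _ => (0:ℝ)) h
    simpa using this

private lemma tsum_eq_forall_of_le {f g : ℕ → ℝ} (hf : Summable f) (hg : Summable g)
    (hle : ∀ i, f i ≤ g i) (h : ∑' i, f i = ∑' i, g i) : ∀ i, f i = g i := by
  by_contra hc
  push_neg at hc
  obtain ⟨i, hi⟩ := hc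
  exact absurd h (ne_of_lt (Summable.tsum_lt_tsum hle (lt_of_le_of_ne (hle i) hi) hf hg))

/-- `Z(X|Y) = 0 ↔ H(X|Y) = 0` and `Z(X|Y) = 1 ↔ H(X|Y) = 1`. -/
theorem stmt15 (p : Bool → ℕ → ℝ) (hp : ∀ x y, 0 ≤ p x y)
    (hsum : HasSum (fun z : Bool × ℕ => p z.1 z.2) 1) :
    (bhat p = 0 ↔ condEnt p = 0) ∧ (bhat p = 1 ↔ condEnt p = 1) := by
  set S : ℕ → ℝ := fun y => p true y + p false y with hSdef
  have hS : HasSum S 1 := by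
    have h1 : HasSum (fun z : ℕ × Bool => p z.2 z.1) 1 :=
      (Equiv.prodComm ℕ Bool).hasSum_iff.mpr hsum
    exact h1.prod_fiberwise fun y => by
      simpa [Fintype.sum_bool] using hasSum_fintype (fun x : Bool => p x y)
  have hSsum : Summable S := hS.summable
  have hStot : ∑' y, S y = 1 := hS.tsum_eq
  have hS0 : ∀ y, 0 ≤ S y := fun y => add_nonneg (hp _ _) (hp _ _)
  -- entropy terms
  set h : ℕ → ℝ := fun y =>
    -(p true y * Real.logb 2 (p true y / (p true y + p false y))) +
    -(p false y * Real.logb 2 (p false y / (p true y + p false y))) with hhdef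
  have hce : condEnt p = ∑' y, h y := by
    unfold condEnt
    exact tsum_congr fun y => by simp only [Fintype.sum_bool, hhdef]
  have hh0 : ∀ y, 0 ≤ h y := fun y => h2_nonneg (hp true y) (hp false y)
  have hhle : ∀ y, h y ≤ S y := fun y => h2_le (hp true y) (hp false y)
  have hhsum : Summable h := Summable.of_nonneg_of_le hh0 hhle hSsum
  -- Bhattacharyya terms
  set z : ℕ → ℝ := fun y => Real.sqrt (p false y * p true y) with hzdef
  have hz0 : ∀ y, 0 ≤ z y := fun y => Real.sqrt_nonneg _
  have hzle : ∀ y, z y ≤ S y / 2 := fun y => sqrt_le_half (hp true y) (hp false y)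
  have hzsum : Summable z := Summable.of_nonneg_of_le hz0
    (fun y => (hzle y).trans (half_le_self (hS0 y))) hSsum
  have hbh : bhat p = 2 * ∑' y, z y := rfl
  constructor
  · -- Z = 0 ↔ H = 0
    rw [hbh, hce]
    constructor
    · intro hZ
      have hT : ∑' y, z y = 0 := by linarith
      have hz := (tsum_zero_iff_nonneg hzsum hz0).mp hT
      refine (tsum_zero_iff_nonneg hhsum hh0).mpr fun y => ?_
      have : p false y * p true y = 0 := by
        have := hz y
        have := Real.sqrt_eq_zero'.mp this
        have h0 : 0 ≤ p false y * p true y := mul_nonneg (hp _ _) (hp _ _)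
        linarith
      exact (h2_eq_zero_iff (hp true y) (hp false y)).mpr (by
        rw [mul_comm] at this; exact this)
    · intro hH
      have hh := (tsum_zero_iff_nonneg hhsum hh0).mp hH
      have hz : ∀ y, z y = 0 := by
        intro y
        have := (h2_eq_zero_iff (hp true y) (hp false y)).mp (hh y)
        rw [hzdef]
        simp only
        rw [mul_comm] at this
        rw [this, Real.sqrt_zero]
      have : ∑' y, z y = 0 := (tsum_zero_iff_nonneg hzsum hz0).mpr hz
      rw [this]; ring
  · -- Z = 1 ↔ H = 1
    rw [hbh, hce]
    have hS2sum : Summable (fun y => S y / 2) := hSsum.div_const 2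
    have hS2tot : ∑' y, S y / 2 = 1 / 2 := by
      rw [tsum_div_const, hStot]
    constructor
    · intro hZ
      have hT : ∑' y, z y = ∑' y, S y / 2 := by rw [hS2tot]; linarith
      have heq := tsum_eq_forall_of_le hzsum hS2sum hzle hT
      have hab : ∀ y, p true y = p false y := by
        intro y
        by_contra hne
        exact absurd (heq y) (ne_of_lt (sqrt_lt_half (hp true y) (hp false y) hne))
      have : ∀ y, h y = S y := fun y => by
        rw [hhdef, hSdef]
        simp only
        rw [hab y]
        exact h2_eq_of_eq (hp false y)
      rw [tsum_congr this, hStot]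
    · intro hH
      have hT : ∑' y, h y = ∑' y, S y := by rw [hStot]; exact hH
      have heq := tsum_eq_forall_of_le hhsum hSsum hhle hT
      have hab : ∀ y, p true y = p false y := by
        intro y
        by_contra hne
        exact absurd (heq y) (ne_of_lt (h2_lt_of_ne (hp true y) (hp false y) hne))
      have : ∀ y, z y = S y / 2 := fun y => by
        rw [hzdef, hSdef]
        simp only
        rw [← hab y]
        rw [mul_comm]
        exact sqrt_eq_half (hp true y)
      rw [tsum_congr this, hS2tot]
      ring
end
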